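/- Let x ≤ n be natural numbers and consider the weight w(π) = π^x (1−π)^{n−x} on [0,1] (the posterior from x occurrences in n observations under a uniform prior). Then: (i) the posterior mean is π̄ = (∫_0^1 π w(π) dπ)/(∫_0^1 w(π) dπ) = (x+1)/(n+2); and (ii) the posterior expected entropy term is H̄ = (∫_0^1 [π log π + (1−π) log(1−π)] w(π) dπ)/(∫_0^1 w(π) dπ) = ((x+1)/(n+2))(H_{x+1} − H_{n+2}) + ((n−x+1)/(n+2))(H_{n−x+1} − H_{n+2}), where H_k = ∑_{i=1}^k 1/i. -/

import Mathlib

section Helpers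
open intervalIntegral Real

lemma contPowLog (k : ℕ) : Continuous (fun t : ℝ => t ^ (k+1) * Real.log t) := by
  have : (fun t : ℝ => t ^ (k+1) * Real.log t) = fun t => t ^ k * (t * Real.log t) := by
    funext t; ring
  rw [this]
  exact (continuous_pow k).mul Real.continuous_mul_log

lemma hdPow (a b : ℕ) (t : ℝ) :
    HasDerivAt (fun t : ℝ => t ^ (a+1) * (1-t) ^ b)
      (((a:ℝ)+1) * t ^ a * (1-t) ^ b - (b:ℝ) * t^(a+1) * (1-t)^(b-1)) t := by
  have h1 : HasDerivAt (fun t : ℝ => t ^ (a+1)) (((a:ℝ)+1) * t ^ a) t := by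
    simpa using hasDerivAt_pow (a+1) t
  have h2 : HasDerivAt (fun t : ℝ => (1-t) ^ b) ((b:ℝ) * (1-t)^(b-1) * (-1)) t := by
    exact (hasDerivAt_pow b (1-t)).comp t ((hasDerivAt_id t).const_sub 1)
  have := (h1.mul h2 : HasDerivAt (fun t : ℝ => t ^ (a+1) * (1-t) ^ b) _ t)
  refine this.congr_deriv ?_
  ring

lemma beta_nat (a b : ℕ) : (∫ t in (0:ℝ)..1, t ^ a * (1-t) ^ b)
    = (a.factorial * b.factorial : ℝ) / (a+b+1).factorial := by
  induction b generalizing a with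
  | zero =>
    have hpos : (0:ℝ) < a.factorial := by positivity
    simp [integral_pow, Nat.factorial_succ]
    field_simp
  | succ b ih =>
    have key : ∫ t in (0:ℝ)..1,
        (((a:ℝ)+1) * (t ^ a * (1-t) ^ (b+1)) - ((b:ℝ)+1) * (t^(a+1) * (1-t)^b))
        = 0 := by
      rw [integral_eq_sub_of_hasDerivAt (f := fun t : ℝ => t ^ (a+1) * (1-t) ^ (b+1))
        (fun t _ => by
          have := hdPow a (b+1) t
          simpa [mul_assoc] using this)]
      · simp
      · apply Continuous.intervalIntegrable; continuity
    rw [intervalIntegral.integral_sub, intervalIntegral.integral_const_mul,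
      intervalIntegral.integral_const_mul, sub_eq_zero, ih (a+1)] at key
    rotate_left
    · apply Continuous.intervalIntegrable; continuity
    · apply Continuous.intervalIntegrable; continuity
    have hD : (a+(b+1)+1) = (a+1)+b+1 := by omega
    rw [hD]
    have hpos : (0:ℝ) < ((a+1)+b+1).factorial := by positivity
    have ha : ((a:ℝ)+1) ≠ 0 := by positivity
    field_simp [Nat.factorial_succ] at key ⊢
    rw [Nat.factorial_succ a] at key
    rw [Nat.factorial_succ b]
    push_cast at key ⊢
    apply mul_left_cancel₀ ha
    linear_combination key

lemma contTerm (k j : ℕ) : Continuous (fun t : ℝ => t^(k+1) * (1-t)^j * Real.log t) := by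
  have : (fun t : ℝ => t^(k+1) * (1-t)^j * Real.log t)
      = fun t => (t^(k+1) * Real.log t) * (1-t)^j := by funext t; ring
  rw [this]
  exact (contPowLog k).mul (by continuity)

lemma hdPowLog (a b : ℕ) (t : ℝ) (ht : t ≠ 0) :
    HasDerivAt (fun t : ℝ => t^(a+2) * (1-t)^b * Real.log t)
      ((((a:ℝ)+2) * (t^(a+1) * (1-t)^b * Real.log t) - (b:ℝ) * (t^(a+2) * (1-t)^(b-1) * Real.log t))
        + t^(a+1) * (1-t)^b) t := by
  have h1 : HasDerivAt (fun t : ℝ => t ^ ((a+1)+1) * (1-t) ^ b)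
      (((a:ℝ)+1+1) * t ^ (a+1) * (1-t) ^ b - (b:ℝ) * t^((a+1)+1) * (1-t)^(b-1)) t := by
    have := hdPow (a+1) b t
    push_cast at this ⊢
    convert this using 2 <;> push_cast <;> ring
  have h2 := (h1.mul (Real.hasDerivAt_log ht) :
    HasDerivAt (fun t : ℝ => t ^ ((a+1)+1) * (1-t) ^ b * Real.log t) _ t)
  refine h2.congr_deriv ?_
  have hts : t^(a+2) = t^(a+1) * t := by ring
  rw [show t^(a+1+1) = t^(a+1) * t by ring, mul_assoc (t^(a+1) * t), mul_assoc (t^(a+1)), mul_left_comm t, mul_inv_cancel₀ ht, mul_one]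
  ring

lemma logbeta (a b : ℕ) : (∫ t in (0:ℝ)..1, t^(a+1) * (1-t)^b * Real.log t)
    = ((a+1).factorial * b.factorial / (a+b+2).factorial : ℝ)
      * ((harmonic (a+1) : ℝ) - (harmonic (a+b+2) : ℝ)) := by
  induction b generalizing a with
  | zero =>
    have key : ∫ t in (0:ℝ)..1,
        ((((a:ℝ)+2) * (t^(a+1) * (1-t)^0 * Real.log t)
          - (0:ℝ) * (t^(a+2) * (1-t)^(0-1) * Real.log t)) + t^(a+1) * (1-t)^0) = 0 := by
      rw [intervalIntegral.integral_eq_sub_of_hasDeriv_right_of_le (le_refl (0:ℝ) |>.trans zero_le_one)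
        (f := fun t : ℝ => t^(a+2) * (1-t)^0 * Real.log t)]
      · simp
      · exact (contTerm (a+1) 0).continuousOn
      · intro t ht
        have := (hdPowLog a 0 t (ne_of_gt ht.1)).hasDerivWithinAt (s := Set.Ioi t)
        convert this using 2
        push_cast; ring
      · apply Continuous.intervalIntegrable
        exact ((continuous_const.mul (contTerm a 0)).sub
          (continuous_const.mul (contTerm (a+1) 0))).add (by continuity)
    rw [intervalIntegral.integral_add, intervalIntegral.integral_sub,
      intervalIntegral.integral_const_mul, intervalIntegral.integral_const_mul,
      beta_nat (a+1) 0] at key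
    rotate_left
    · exact (continuous_const.mul (contTerm a 0)).intervalIntegrable _ _
    · exact (continuous_const.mul (contTerm (a+1) 0)).intervalIntegrable _ _
    · exact ((continuous_const.mul (contTerm a 0)).sub
        (continuous_const.mul (contTerm (a+1) 0))).intervalIntegrable _ _
    · exact (by continuity : Continuous fun t : ℝ => t^(a+1) * (1-t)^0).intervalIntegrable _ _
    have h2 : ((a:ℝ)+2) ≠ 0 := by positivity
    have hfa : ((a+1).factorial : ℝ) ≠ 0 := by positivity
    have hbb : ((a+1).factorial * Nat.factorial 0 : ℝ) / ((a+1+0+1).factorial : ℝ)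
        = ((a:ℝ)+2)⁻¹ := by
      rw [show a+1+0+1 = (a+1)+1 from rfl, Nat.factorial_succ (a+1)]
      push_cast
      field_simp
      ring
    push_cast at key
    rw [show ((a+1).factorial * Nat.factorial 0 : ℝ) / ((a+1+0+1).factorial : ℝ)
        = ((a:ℝ)+2)⁻¹ from hbb] at key
    set I := ∫ t in (0:ℝ)..1, t^(a+1) * (1-t)^0 * Real.log t with hIdef
    have hI : I = -((a:ℝ)+2)⁻¹ / ((a:ℝ)+2) := by
      rw [eq_div_iff h2]
      linear_combination key
    rw [hI, show a+0+2 = (a+1)+1 from rfl, harmonic_succ (a+1), Nat.factorial_succ (a+1)]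
    push_cast
    field_simp
    ring
  | succ b ih =>
    have key : ∫ t in (0:ℝ)..1,
        ((((a:ℝ)+2) * (t^(a+1) * (1-t)^(b+1) * Real.log t)
          - ((b:ℝ)+1) * (t^(a+2) * (1-t)^b * Real.log t)) + t^(a+1) * (1-t)^(b+1)) = 0 := by
      rw [intervalIntegral.integral_eq_sub_of_hasDeriv_right_of_le zero_le_one
        (f := fun t : ℝ => t^(a+2) * (1-t)^(b+1) * Real.log t)]
      · simp
      · exact (contTerm (a+1) (b+1)).continuousOn
      · intro t ht
        have := (hdPowLog a (b+1) t (ne_of_gt ht.1)).hasDerivWithinAt (s := Set.Ioi t)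
        convert this using 2
        push_cast; ring
      · apply Continuous.intervalIntegrable
        exact ((continuous_const.mul (contTerm a (b+1))).sub
          (continuous_const.mul (contTerm (a+1) b))).add (by continuity)
    rw [intervalIntegral.integral_add, intervalIntegral.integral_sub,
      intervalIntegral.integral_const_mul, intervalIntegral.integral_const_mul,
      beta_nat (a+1) (b+1)] at key
    rotate_left
    · exact (continuous_const.mul (contTerm a (b+1))).intervalIntegrable _ _
    · exact (continuous_const.mul (contTerm (a+1) b)).intervalIntegrable _ _
    · exact ((continuous_const.mul (contTerm a (b+1))).sub
        (continuous_const.mul (contTerm (a+1) b))).intervalIntegrable _ _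
    · exact (by continuity : Continuous fun t : ℝ => t^(a+1) * (1-t)^(b+1)).intervalIntegrable _ _
    have ihh := ih (a+1)
    rw [show (a+1)+1 = a+2 from rfl] at ihh
    rw [ihh] at key
    have e1 : a+(b+1)+2 = (a+b+2)+1 := by omega
    have e2 : (a+1)+b+2 = (a+b+2)+1 := by omega
    have e3 : (a+1)+(b+1)+1 = (a+b+2)+1 := by omega
    simp only [e1, e2, e3] at key ⊢
    simp only [harmonic_succ (a+b+2), Nat.factorial_succ (a+b+2),
      Nat.factorial_succ (b), Nat.factorial_succ (a+1),
      show a+2 = (a+1)+1 from rfl, harmonic_succ (a+1)] at key ⊢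
    push_cast at key ⊢
    have h2 : ((a:ℝ)+2) ≠ 0 := by positivity
    have hfa : ((a+1).factorial : ℝ) ≠ 0 := by positivity
    have hfb : ((b).factorial : ℝ) ≠ 0 := by positivity
    have hfd : (((a+b+2)).factorial : ℝ) ≠ 0 := by positivity
    have hd3 : ((a:ℝ)+(b:ℝ)+2+1) ≠ 0 := by positivity
    set I := ∫ t in (0:ℝ)..1, t^(a+1) * (1-t)^(b+1) * Real.log t with hIdef
    have hI : I = (((b:ℝ)+1) * (((a:ℝ)+1+1) * ((a+1).factorial:ℝ) * ((b).factorial:ℝ)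
          / (((a:ℝ)+(b:ℝ)+2+1) * ((a+b+2).factorial:ℝ))
          * ((harmonic (a+1) : ℝ) + ((a:ℝ)+1+1)⁻¹
            - ((harmonic (a+b+2) : ℝ) + ((a:ℝ)+(b:ℝ)+2+1)⁻¹)))
        - ((a+1).factorial:ℝ) * (((b:ℝ)+1) * ((b).factorial:ℝ))
          / (((a:ℝ)+(b:ℝ)+2+1) * ((a+b+2).factorial:ℝ))) / ((a:ℝ)+2) := by
      rw [eq_div_iff h2]
      linear_combination key
    rw [hI]
    field_simp
    ring


end Helpers


/-- For the posterior weight `w(π) = π^x (1−π)^(n−x)` on `[0,1]`: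
(i) the posterior mean is `(x+1)/(n+2)`; (ii) the posterior expectation of
`π log π + (1−π) log(1−π)` is
`((x+1)/(n+2))(H_{x+1} − H_{n+2}) + ((n−x+1)/(n+2))(H_{n−x+1} − H_{n+2})`. -/
theorem frequency_posterior_mean_and_entropy (x n : ℕ) (hxn : x ≤ n) :
    ((∫ π in (0 : ℝ)..1, π * (π ^ x * (1 - π) ^ (n - x)))
        / (∫ π in (0 : ℝ)..1, π ^ x * (1 - π) ^ (n - x))
      = ((x : ℝ) + 1) / ((n : ℝ) + 2)) ∧
    ((∫ π in (0 : ℝ)..1,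
          (π * Real.log π + (1 - π) * Real.log (1 - π)) * (π ^ x * (1 - π) ^ (n - x)))
        / (∫ π in (0 : ℝ)..1, π ^ x * (1 - π) ^ (n - x))
      = (((x : ℝ) + 1) / ((n : ℝ) + 2))
          * ((harmonic (x + 1) : ℝ) - (harmonic (n + 2) : ℝ))
        + (((n : ℝ) - (x : ℝ) + 1) / ((n : ℝ) + 2))
          * ((harmonic (n - x + 1) : ℝ) - (harmonic (n + 2) : ℝ))) := by
  obtain ⟨m, rfl⟩ : ∃ m, n = x + m := ⟨n - x, by omega⟩
  have hsub : x + m - x = m := by omega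
  rw [hsub]
  -- denominator
  have hDval := beta_nat x m
  have hDpos : (0:ℝ) < (x.factorial * m.factorial : ℝ) / (x+m+1).factorial := by positivity
  -- facts
  have hfx : ((x.factorial : ℝ)) ≠ 0 := by positivity
  have hfm : ((m.factorial : ℝ)) ≠ 0 := by positivity
  have hfd : (((x+m+1).factorial : ℝ)) ≠ 0 := by positivity
  have hxm2 : ((x:ℝ)+(m:ℝ)+2) ≠ 0 := by positivity
  constructor
  · -- mean
    have hN : (∫ π in (0:ℝ)..1, π * (π ^ x * (1 - π) ^ m))
        = ∫ π in (0:ℝ)..1, π ^ (x+1) * (1 - π) ^ m := by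
      apply intervalIntegral.integral_congr
      intro t _
      ring
    rw [hN, beta_nat (x+1) m, hDval]
    rw [show (x+1)+m+1 = (x+m+1)+1 from by omega, Nat.factorial_succ (x+m+1),
      Nat.factorial_succ x]
    push_cast
    field_simp
    ring
  · -- entropy
    have hsplit : (∫ π in (0:ℝ)..1,
          (π * Real.log π + (1 - π) * Real.log (1 - π)) * (π ^ x * (1 - π) ^ m))
        = (∫ π in (0:ℝ)..1, π ^ (x+1) * (1 - π) ^ m * Real.log π)
          + ∫ π in (0:ℝ)..1, (1-π) ^ (m+1) * (1 - (1-π)) ^ x * Real.log (1-π) := by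
      rw [← intervalIntegral.integral_add]
      · apply intervalIntegral.integral_congr
        intro t _
        simp only [sub_sub_cancel]
        ring
      · exact (contTerm x m).intervalIntegrable _ _
      · have hc : Continuous (fun t : ℝ => (1-t) ^ (m+1) * (1 - (1-t)) ^ x * Real.log (1-t)) :=
          (contTerm m x).comp (continuous_const.sub continuous_id)
        exact hc.intervalIntegrable _ _
    have hcomp : (∫ π in (0:ℝ)..1, (1-π) ^ (m+1) * (1 - (1-π)) ^ x * Real.log (1-π))
        = ∫ u in (0:ℝ)..1, u ^ (m+1) * (1 - u) ^ x * Real.log u := by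
      have := intervalIntegral.integral_comp_sub_left
        (f := fun u : ℝ => u ^ (m+1) * (1 - u) ^ x * Real.log u) (a := (0:ℝ)) (b := 1) 1
      norm_num at this
      rw [← this]
      apply intervalIntegral.integral_congr
      intro t _
      simp [sub_sub_cancel]
    rw [hsplit, hcomp, logbeta x m, logbeta m x, hDval]
    rw [show m+x+2 = x+m+2 from by omega]
    rw [show x+m+2 = (x+m+1)+1 from rfl, Nat.factorial_succ (x+m+1),
      Nat.factorial_succ x, Nat.factorial_succ m]
    push_cast
    field_simp
    ring
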